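/- Let A, C, J be endomorphisms of a 2-dimensional real inner product space with A symmetric, J the rotation by π/2 (orthogonal almost complex structure), such that A∘C = Cᵗ∘A and A∘J = Jᵗ∘A. If the pair {A, A'} for symmetric A' satisfying the same relations spans a 2-dimensional space of symmetric traceless operators, then C ∈ span{I, J}. -/

import Mathlib

/-- Linear-algebra content of Lemma 1: let `V` be a 2-dimensional real inner
product space, `J` an orthogonal almost complex structure (rotation by `π/2`,
i.e. `J² = -I` and `J` preserves the inner ℝ product).  If `C : V → V` is linear
and satisfies `A ∘ C = Cᵗ ∘ A` (i.e. `⟨A(Cx), y⟩ = ⟨Ax, Cy⟩` for all `x, y`)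
for every symmetric traceless endomorphism `A` of `V`, then
`C = v·I - u·J` for some reals `u, v`. -/
theorem stmt_15 {V : Type*} [NormedAddCommGroup V] [InnerProductSpace ℝ V]
    [FiniteDimensional ℝ V] (hdim : Module.finrank ℝ V = 2)
    (J : V →ₗ[ℝ] V) (hJ2 : J ∘ₗ J = -LinearMap.id)
    (hJorth : ∀ x y : V, (inner ℝ (J x) (J y) : ℝ) = inner ℝ x y)
    (C : V →ₗ[ℝ] V)
    (hC : ∀ A : V →ₗ[ℝ] V, (∀ x y : V, (inner ℝ (A x) y : ℝ) = inner ℝ x (A y)) →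
      LinearMap.trace ℝ V A = 0 →
      ∀ x y : V, (inner ℝ (A (C x)) y : ℝ) = inner ℝ (A x) (C y)) :
    ∃ u v : ℝ, C = v • LinearMap.id - u • J := by
  have hJJ : ∀ x : V, J (J x) = -x := by
    intro x
    have := congrArg (fun L : V →ₗ[ℝ] V => L x) hJ2
    simpa using this
  -- pick a unit vector e and set f = J e
  let ob := stdOrthonormalBasis ℝ V
  have h0 : 0 < Module.finrank ℝ V := by omega
  set e : V := ob ⟨0, h0⟩ with he_def
  set f : V := J e with hf_def
  have hee : (inner ℝ e e : ℝ) = 1 := by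
    have := ob.orthonormal.1 ⟨0, h0⟩
    rw [real_inner_self_eq_norm_sq, this]; norm_num
  have hff : (inner ℝ f f : ℝ) = 1 := by rw [hf_def, hJorth]; exact hee
  have hef : (inner ℝ e f : ℝ) = 0 := by
    have h1 : (inner ℝ e (J e) : ℝ) = inner ℝ (J e) (J (J e)) := (hJorth e (J e)).symm
    rw [hJJ, inner_neg_right, real_inner_comm (J e) e] at h1
    have h2 : (inner ℝ (J e) e : ℝ) = 0 := by linarith
    rw [hf_def, real_inner_comm]
    exact h2
  have hfe : (inner ℝ f e : ℝ) = 0 := by rw [real_inner_comm]; exact hef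
  -- {e, f} is an orthonormal basis
  have hv : Orthonormal ℝ (![e, f]) := by
    rw [orthonormal_iff_ite]
    intro i j
    fin_cases i <;> fin_cases j <;> simp [hee, hff, hef, hfe]
      <;> simp only [norm_eq_sqrt_real_inner, hee, hff, Real.sqrt_one, true_or]
  let B : Module.Basis (Fin 2) ℝ V := basisOfOrthonormalOfCardEqFinrank hv (by simp [hdim])
  have hB : ⇑B = ![e, f] := coe_basisOfOrthonormalOfCardEqFinrank hv _
  have hB0 : B 0 = e := by rw [hB]; rfl
  have hB1 : B 1 = f := by rw [hB]; rfl
  have hBorth : Orthonormal ℝ ⇑B := by rw [hB]; exact hv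
  let OB : OrthonormalBasis (Fin 2) ℝ V := B.toOrthonormalBasis hBorth
  have hOB0 : OB 0 = e := by simp [OB, hB0]
  have hOB1 : OB 1 = f := by simp [OB, hB1]
  -- expansion in the orthonormal basis
  have hexp : ∀ x : V, x = (inner ℝ e x : ℝ) • e + (inner ℝ f x : ℝ) • f := by
    intro x
    have := OB.sum_repr' x
    rw [Fin.sum_univ_two, hOB0, hOB1] at this
    simpa using this.symm
  -- the two symmetric traceless operators
  let A1 : V →ₗ[ℝ] V :=
    ((innerSL ℝ e).toLinearMap).smulRight e - ((innerSL ℝ f).toLinearMap).smulRight f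
  let A2 : V →ₗ[ℝ] V :=
    ((innerSL ℝ e).toLinearMap).smulRight f + ((innerSL ℝ f).toLinearMap).smulRight e
  have hA1 : ∀ x : V, A1 x = (inner ℝ e x : ℝ) • e - (inner ℝ f x : ℝ) • f := fun x => rfl
  have hA2 : ∀ x : V, A2 x = (inner ℝ e x : ℝ) • f + (inner ℝ f x : ℝ) • e := fun x => rfl
  have hA1sym : ∀ x y : V, (inner ℝ (A1 x) y : ℝ) = inner ℝ x (A1 y) := by
    intro x y
    rw [hA1, hA1, inner_sub_left, inner_sub_right, real_inner_smul_left,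
      real_inner_smul_left, real_inner_smul_right, real_inner_smul_right,
      real_inner_comm e x, real_inner_comm f x, real_inner_comm x e, real_inner_comm x f]
    ring
  have hA2sym : ∀ x y : V, (inner ℝ (A2 x) y : ℝ) = inner ℝ x (A2 y) := by
    intro x y
    rw [hA2, hA2, inner_add_left, inner_add_right, real_inner_smul_left,
      real_inner_smul_left, real_inner_smul_right, real_inner_smul_right,
      real_inner_comm e x, real_inner_comm f x, real_inner_comm x e, real_inner_comm x f]
    ring
  have hA1e : A1 e = e := by rw [hA1, hee, hfe]; simp
  have hA1f : A1 f = -f := by rw [hA1, hef, hff]; simp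
  have hA2e : A2 e = f := by rw [hA2, hee, hfe]; simp
  have hA2f : A2 f = e := by rw [hA2, hef, hff]; simp
  have hA1tr : LinearMap.trace ℝ V A1 = 0 := by
    rw [LinearMap.trace_eq_matrix_trace ℝ B]
    simp only [Matrix.trace, Matrix.diag, LinearMap.toMatrix_apply, Fin.sum_univ_two,
      hB0, hB1, hA1e, hA1f, map_neg]
    rw [← hB0, ← hB1]
    simp
  have hA2tr : LinearMap.trace ℝ V A2 = 0 := by
    rw [LinearMap.trace_eq_matrix_trace ℝ B]
    simp only [Matrix.trace, Matrix.diag, LinearMap.toMatrix_apply, Fin.sum_univ_two,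
      hB0, hB1, hA2e, hA2f]
    rw [← hB0, ← hB1]
    simp
  -- the coefficients of C
  set a : ℝ := inner ℝ e (C e) with ha_def
  set b : ℝ := inner ℝ f (C e) with hb_def
  -- relation from A1 : ⟨e, C f⟩ = -b
  have h1 := hC A1 hA1sym hA1tr e f
  rw [hA1e, hA1 (C e), inner_sub_left, real_inner_smul_left, real_inner_smul_left,
    hef, hff] at h1
  have heCf : (inner ℝ e (C f) : ℝ) = -b := by
    rw [← h1, ← hb_def]; ring
  -- relation from A2 : ⟨f, C f⟩ = a
  have h2 := hC A2 hA2sym hA2tr e f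
  rw [hA2e, hA2 (C e), inner_add_left, real_inner_smul_left, real_inner_smul_left,
    hff, hef] at h2
  have hfCf : (inner ℝ f (C f) : ℝ) = a := by
    rw [← h2, ← ha_def]; ring
  refine ⟨-b, a, ?_⟩
  apply B.ext
  intro i
  fin_cases i
  · show C (B 0) = (a • LinearMap.id - (-b) • J : V →ₗ[ℝ] V) (B 0)
    rw [hB0]
    have hCe : C e = a • e + b • f := by rw [ha_def, hb_def]; exact hexp (C e)
    rw [hCe]
    simp only [LinearMap.sub_apply, LinearMap.smul_apply, LinearMap.id_apply, ← hf_def]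
    module
  · show C (B 1) = (a • LinearMap.id - (-b) • J : V →ₗ[ℝ] V) (B 1)
    rw [hB1]
    have hCf : C f = (-b) • e + a • f := by
      have h3 := hexp (C f)
      rw [heCf, hfCf] at h3
      exact h3
    have hJf : J f = -e := by rw [hf_def]; exact hJJ e
    rw [hCf]
    simp only [LinearMap.sub_apply, LinearMap.smul_apply, LinearMap.id_apply, hJf]
    module
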